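/- Let n and l be positive integers. Then for every integer k with 4n + 2l + 2 ≤ k ≤ 4n + 3l + 2, there exists an edge-magic labeling of K_{1,n} ∪ lK_1 with valence k. -/

import Mathlib

/-- `f` is an edge-magic labeling of the graph `G` with valence `k`:
`f` is a bijection from `V(G) ∪ E(G)` onto `{1, …, p + q}` and
`f u + f v + f uv = k` for every edge `uv`. -/
def IsEdgeMagic {V : Type*} [Fintype V] (G : SimpleGraph V)
    (f : V ⊕ G.edgeSet → ℕ) (k : ℕ) : Prop :=
  Set.BijOn f Set.univ (Set.Icc 1 (Fintype.card V + G.edgeSet.ncard)) ∧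
  ∀ u v, ∀ h : G.Adj u v,
    f (Sum.inl u) + f (Sum.inl v) + f (Sum.inr ⟨s(u, v), G.mem_edgeSet.mpr h⟩) = k

/-- `f` is a super edge-magic labeling of `G` with valence `k`: an edge-magic
labeling whose vertex labels are exactly `{1, …, p}`. -/
def IsSuperEdgeMagic {V : Type*} [Fintype V] (G : SimpleGraph V)
    (f : V ⊕ G.edgeSet → ℕ) (k : ℕ) : Prop :=
  IsEdgeMagic G f k ∧ ∀ v, f (Sum.inl v) ∈ Set.Icc 1 (Fintype.card V)

/-- The graph `K_{1,n} ∪ lK_1`: the disjoint union of the star `K_{1,n}`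
(with center `0` and leaves `1, …, n`) and `l` isolated vertices
(`n+1, …, n+l`), on `n + l + 1` vertices. -/
def starUnion (n l : ℕ) : SimpleGraph (Fin (n + l + 1)) where
  Adj u v := (u = 0 ∧ v ≠ 0 ∧ (v : ℕ) ≤ n) ∨ (v = 0 ∧ u ≠ 0 ∧ (u : ℕ) ≤ n)
  symm := ⟨fun u v h => h.symm⟩
  loopless := ⟨fun v h => by rcases h with ⟨h1, h2, _⟩ | ⟨h1, h2, _⟩ <;> exact h2 h1⟩

lemma starUnion_edge_char (n l : ℕ) :
    ∀ e ∈ (starUnion n l).edgeSet, ∃ v : Fin (n + l + 1),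
      (v : ℕ) ≠ 0 ∧ (v : ℕ) ≤ n ∧ e = s((0 : Fin (n + l + 1)), v) := by
  intro e he
  induction e using Sym2.ind with
  | _ u v =>
    rw [SimpleGraph.mem_edgeSet] at he
    rcases he with ⟨hu, hv, hvn⟩ | ⟨hv, hu, hun⟩
    · refine ⟨v, ?_, hvn, by rw [hu]⟩
      intro h; exact hv (Fin.ext (by simp [h]))
    · refine ⟨u, ?_, hun, by rw [hv, Sym2.eq_swap]⟩
      intro h; exact hu (Fin.ext (by simp [h]))

lemma starUnion_ncard (n l : ℕ) : (starUnion n l).edgeSet.ncard = n := by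
  have himg : (starUnion n l).edgeSet =
      (fun j : Fin n => s((0 : Fin (n + l + 1)),
        (⟨(j : ℕ) + 1, by omega⟩ : Fin (n + l + 1)))) '' Set.univ := by
    apply Set.eq_of_subset_of_subset
    · intro e he
      obtain ⟨v, hv0, hvn, hev⟩ := starUnion_edge_char n l e he
      refine ⟨⟨(v : ℕ) - 1, by omega⟩, Set.mem_univ _, ?_⟩
      rw [hev]
      simp only [Sym2.eq_iff, Fin.ext_iff]
      left
      simp
      omega
    · rintro e ⟨j, -, rfl⟩
      rw [SimpleGraph.mem_edgeSet]
      refine Or.inl ⟨rfl, ?_, by simp⟩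
      intro h
      have := congrArg Fin.val h
      simp at this
  rw [himg, Set.ncard_image_of_injective _ ?_, Set.ncard_univ]
  · simp
  · intro a b hab
    rw [Sym2.eq_iff] at hab
    rcases hab with ⟨-, h⟩ | ⟨h, -⟩
    · have := congrArg Fin.val h
      simp at this
      exact Fin.ext this
    · have := congrArg Fin.val h
      simp at this

set_option maxHeartbeats 1000000 in
/-- Let `n` and `l` be positive integers. Then for every integer `k` with
`4n + 2l + 2 ≤ k ≤ 4n + 3l + 2` there exists an edge-magic labeling of
`K_{1,n} ∪ lK_1` with valence `k`. -/
theorem stmt_17 (n l : ℕ) (hn : 1 ≤ n) (hl : 1 ≤ l) :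
    ∀ k : ℕ, 4 * n + 2 * l + 2 ≤ k → k ≤ 4 * n + 3 * l + 2 →
      ∃ f, IsEdgeMagic (starUnion n l) f k := by
  intro k hk1 hk2
  set t := k - (4 * n + 2 * l + 2) with ht
  have ht_le : t ≤ l := by omega
  have hk : k = 4 * n + 2 * l + 2 + t := by omega
  -- vertex labels
  set vl : Fin (n + l + 1) → ℕ := fun v =>
    if (v : ℕ) = 0 then 2 * n + l + 1
    else if (v : ℕ) ≤ n then t + (v : ℕ)
    else if (v : ℕ) ≤ n + t then (v : ℕ) - n
    else (v : ℕ) with hvl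
  set esum : Sym2 (Fin (n + l + 1)) → ℕ :=
    Sym2.lift ⟨fun u v => (u : ℕ) + (v : ℕ), fun u v => by ring⟩ with hesum
  set f : Fin (n + l + 1) ⊕ (starUnion n l).edgeSet → ℕ :=
    Sum.elim vl (fun e => 2 * n + l + 1 - esum e.1) with hf
  have hes : ∀ e : (starUnion n l).edgeSet, ∃ v : Fin (n + l + 1),
      (v : ℕ) ≠ 0 ∧ (v : ℕ) ≤ n ∧ e.1 = s((0 : Fin (n + l + 1)), v) ∧
      esum e.1 = (v : ℕ) := by
    rintro ⟨e, he⟩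
    obtain ⟨v, hv0, hvn, hev⟩ := starUnion_edge_char n l e he
    refine ⟨v, hv0, hvn, hev, ?_⟩
    show esum e = (v : ℕ)
    rw [hev]
    simp [hesum]
  set g : ℕ → Fin (n + l + 1) ⊕ (starUnion n l).edgeSet := fun m =>
    if h : 1 ≤ m ∧ m ≤ t then Sum.inl ⟨n + m, by omega⟩
    else if h : t + 1 ≤ m ∧ m ≤ t + n then Sum.inl ⟨m - t, by omega⟩
    else if h : t + n + 1 ≤ m ∧ m ≤ n + l then Sum.inl ⟨m, by omega⟩
    else if h : n + l + 1 ≤ m ∧ m ≤ 2 * n + l then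
      Sum.inr ⟨s((0 : Fin (n + l + 1)), (⟨2 * n + l + 1 - m, by omega⟩ : Fin (n + l + 1))),
        (starUnion n l).mem_edgeSet.mpr (Or.inl ⟨rfl,
          by intro hc; have := congrArg Fin.val hc; simp at this; omega,
          by simp; omega⟩)⟩
    else Sum.inl 0 with hg
  have hmaps : ∀ x, f x ∈ Set.Icc 1 (2 * n + l + 1) := by
    rintro (v | e)
    · have hvlt := v.isLt
      simp only [hf, Sum.elim_inl, hvl, Set.mem_Icc]
      split_ifs <;> omega
    · obtain ⟨v, hv0, hvn, hev, hesv⟩ := hes e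
      simp only [hf, Sum.elim_inr, hesv, Set.mem_Icc]
      omega
  have hleft : ∀ x, g (f x) = x := by
    rintro (v | e)
    · have hvlt := v.isLt
      by_cases h0 : (v : ℕ) = 0
      · have hval : f (Sum.inl v) = 2 * n + l + 1 := by
          simp only [hf, Sum.elim_inl, hvl, if_pos h0]
        rw [hval]
        simp only [hg]
        rw [dif_neg (by omega), dif_neg (by omega), dif_neg (by omega), dif_neg (by omega)]
        exact congrArg Sum.inl (Fin.ext (by simp [h0])).symm
      · by_cases h1 : (v : ℕ) ≤ n
        · have hval : f (Sum.inl v) = t + (v : ℕ) := by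
            simp only [hf, Sum.elim_inl, hvl, if_neg h0, if_pos h1]
          rw [hval]
          simp only [hg]
          rw [dif_neg (by omega), dif_pos (by omega)]
          exact congrArg Sum.inl (Fin.ext (by simp <;> omega))
        · by_cases h2 : (v : ℕ) ≤ n + t
          · have hval : f (Sum.inl v) = (v : ℕ) - n := by
              simp only [hf, Sum.elim_inl, hvl, if_neg h0, if_neg h1, if_pos h2]
            rw [hval]
            simp only [hg]
            rw [dif_pos (by omega)]
            exact congrArg Sum.inl (Fin.ext (by simp <;> omega))
          · have hval : f (Sum.inl v) = (v : ℕ) := by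
              simp only [hf, Sum.elim_inl, hvl, if_neg h0, if_neg h1, if_neg h2]
            rw [hval]
            simp only [hg]
            rw [dif_neg (by omega), dif_neg (by omega), dif_pos (by omega)]
    · obtain ⟨v, hv0, hvn, hev, hesv⟩ := hes e
      have hval : f (Sum.inr e) = 2 * n + l + 1 - (v : ℕ) := by
        simp only [hf, Sum.elim_inr, hesv]
      rw [hval]
      simp only [hg]
      rw [dif_neg (by omega), dif_neg (by omega), dif_neg (by omega), dif_pos (by omega)]
      refine congrArg Sum.inr (Subtype.ext (Eq.trans ?_ hev.symm))
      exact Sym2.eq_iff.mpr (Or.inl ⟨rfl, Fin.ext (by simp <;> omega)⟩)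
  have hvmk : ∀ (a : ℕ) (ha : a < n + l + 1), f (Sum.inl ⟨a, ha⟩)
      = if a = 0 then 2 * n + l + 1 else if a ≤ n then t + a
        else if a ≤ n + t then a - n else a := fun a ha => rfl
  have hkey2 : ∀ (u w : Fin (n + l + 1)) (pf : s(u, w) ∈ (starUnion n l).edgeSet),
      f (Sum.inr ⟨s(u, w), pf⟩) = 2 * n + l + 1 - ((u : ℕ) + (w : ℕ)) := by
    intro u w pf
    simp only [hf, Sum.elim_inr, hesum]
    rfl
  have hright : ∀ m, 1 ≤ m → m ≤ 2 * n + l + 1 → f (g m) = m := by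
    intro m hm1 hm2
    simp only [hg]
    split_ifs with h1 h2 h3 h4
    · rw [hvmk, if_neg (by omega), if_neg (by omega), if_pos (by omega)]
      omega
    · rw [hvmk, if_neg (by omega), if_pos (by omega)]
      omega
    · rw [hvmk, if_neg (by omega), if_neg (by omega), if_neg (by omega)]
    · rw [hkey2]
      simp only [Fin.val_zero]
      simp
      omega
    · have h0 : ((0 : Fin (n + l + 1)) : ℕ) = 0 := by simp
      have : f (Sum.inl (0 : Fin (n + l + 1))) = 2 * n + l + 1 := by
        simp only [hf, Sum.elim_inl, hvl, if_pos h0]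
      rw [this]
      omega
  refine ⟨f, ⟨?_, ?_⟩⟩
  · have hPQ : Fintype.card (Fin (n + l + 1)) + (starUnion n l).edgeSet.ncard
        = 2 * n + l + 1 := by
      rw [Fintype.card_fin, starUnion_ncard]; omega
    rw [hPQ]
    refine Set.InvOn.bijOn ⟨fun x _ => hleft x, fun m hm => ?_⟩
      (fun x _ => hmaps x) (fun m _ => Set.mem_univ _)
    rw [Set.mem_Icc] at hm
    exact hright m hm.1 hm.2
  · intro u v h
    rw [hkey2 u v ((starUnion n l).mem_edgeSet.mpr h)]
    have hfl : ∀ w, f (Sum.inl w) = vl w := fun _ => rfl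
    rw [hfl, hfl]
    rcases h with ⟨hu, hv, hvn⟩ | ⟨hv, hu, hun⟩
    · have hv0 : (v : ℕ) ≠ 0 := fun hh => hv (Fin.ext (by simp [hh]))
      have hu0 : (u : ℕ) = 0 := by rw [hu]; simp
      simp only [hvl]
      rw [if_pos hu0, if_neg hv0, if_pos hvn]
      omega
    · have hu0 : (u : ℕ) ≠ 0 := fun hh => hu (Fin.ext (by simp [hh]))
      have hv0 : (v : ℕ) = 0 := by rw [hv]; simp
      simp only [hvl]
      rw [if_neg hu0, if_pos hun, if_pos hv0]
      omega
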